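/- Let U ⊆ ℝ be an open interval, f_0, …, f_n : U → ℝ differentiable with f_n(u) ≠ 0 for all u ∈ U, and F : U → ℝ three-times differentiable with F(u) ≠ 0 and F'(u) = |f_n(u)|^{1/(n−1)} for all u ∈ U; set g := ((n−2)F)/((n−1)F'). Let a, c ∈ ℝ with c ≠ 0, let ξ : ℝ → ℝ be twice differentiable with ξ'(t) = c·e^{at} for all t, and define η(t,u) := c·e^{at}·g(u). Then (ξ, η) satisfies the reduced system (S) on ℝ × U if and only if equations (E0)–(Ek) hold on U: (E0) −a²g + f_0'g + a·f_1·g − f_0·g' + 2f_0 = 0; (E1) a(1 − 2g') + f_1'g + 2a·f_2·g + f_1 = 0; (E2) −g'' + f_2'g + 3a·f_3·g + f_2·g' = 0; (Ek) f_k'g + (k+1)a·f_{k+1}·g + (k−1)f_k·g' + (2−k)f_k = 0 for each 3 ≤ k ≤ n−1. (Equation (Sn) holds automatically from the definitions of F and g.) -/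

import Mathlib

/-- Partial derivative in the first (time) variable. -/
noncomputable def pt (φ : ℝ → ℝ → ℝ) (t u : ℝ) : ℝ := deriv (fun s => φ s u) t

/-- Partial derivative in the second (space) variable. -/
noncomputable def pu (φ : ℝ → ℝ → ℝ) (t u : ℝ) : ℝ := deriv (fun x => φ t x) u

/-- The expression `E(t,u,v)` from the symmetry condition. -/
noncomputable def symE (n : ℕ) (f : ℕ → ℝ → ℝ) (ξ η : ℝ → ℝ → ℝ) (t u v : ℝ) : ℝ :=
  (-(pt (pt η) t u) + deriv (f 0) u * η t u + f 1 u * pt η t u - f 0 u * pu η t u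
      + 2 * f 0 u * pt ξ t u)
  + (pt (pt ξ) t u - 2 * pu (pt η) t u + deriv (f 1) u * η t u + 2 * f 2 u * pt η t u
      + f 1 u * pt ξ t u + 3 * f 0 u * pu ξ t u) * v
  + (2 * pu (pt ξ) t u - pu (pu η) t u + deriv (f 2) u * η t u + 3 * f 3 u * pt η t u
      + f 2 u * pu η t u + 2 * f 1 u * pu ξ t u) * v ^ 2
  + (pu (pu ξ) t u + deriv (f 3) u * η t u + 4 * f 4 u * pt η t u + 2 * f 3 u * pu η t u
      - f 3 u * pt ξ t u + f 2 u * pu ξ t u) * v ^ 3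
  + (∑ k ∈ Finset.Icc 4 (n - 1),
      (deriv (f k) u * η t u + ((k : ℝ) + 1) * f (k + 1) u * pt η t u
        + ((k : ℝ) - 1) * f k u * pu η t u + (2 - (k : ℝ)) * f k u * pt ξ t u
        + (4 - (k : ℝ)) * f (k - 1) u * pu ξ t u) * v ^ k)
  + (deriv (f n) u * η t u + ((n : ℝ) - 1) * f n u * pu η t u
      + (2 - (n : ℝ)) * f n u * pt ξ t u + (4 - (n : ℝ)) * f (n - 1) u * pu ξ t u) * v ^ n
  + (3 - (n : ℝ)) * f n u * pu ξ t u * v ^ (n + 1)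

/-- The symmetry condition (SC) on `ℝ × U × ℝ`. -/
def SC (n : ℕ) (f : ℕ → ℝ → ℝ) (ξ η : ℝ → ℝ → ℝ) (U : Set ℝ) : Prop :=
  ∀ t : ℝ, ∀ u ∈ U, ∀ v : ℝ, symE n f ξ η t u v = 0

/-- The function `g = ((n−2)F)/((n−1)F')`. -/
noncomputable def gFun (n : ℕ) (F : ℝ → ℝ) (u : ℝ) : ℝ :=
  (((n : ℝ) - 2) * F u) / (((n : ℝ) - 1) * deriv F u)

/-- The system (E0)-(Ek) of equations on `U`. -/
def Esys (n : ℕ) (f : ℕ → ℝ → ℝ) (a : ℝ) (U : Set ℝ) (g : ℝ → ℝ) : Prop :=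
  (∀ u ∈ U, -a ^ 2 * g u + deriv (f 0) u * g u + a * f 1 u * g u
      - f 0 u * deriv g u + 2 * f 0 u = 0) ∧
  (∀ u ∈ U, a * (1 - 2 * deriv g u) + deriv (f 1) u * g u
      + 2 * a * f 2 u * g u + f 1 u = 0) ∧
  (∀ u ∈ U, -(deriv (deriv g) u) + deriv (f 2) u * g u
      + 3 * a * f 3 u * g u + f 2 u * deriv g u = 0) ∧
  (∀ k : ℕ, 3 ≤ k → k ≤ n - 1 → ∀ u ∈ U,
      deriv (f k) u * g u + ((k : ℝ) + 1) * a * f (k + 1) u * g u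
        + ((k : ℝ) - 1) * f k u * deriv g u + (2 - (k : ℝ)) * f k u = 0)

/-- Conditions (C) for the triple `(a, U, F)`:  `F` is three-times differentiable on `U`,
`f n` and `F` do not vanish on `U`, `F' = |f n| ^ (1/(n-1))` on `U`, and the system
(E0)-(Ek) holds on `U` with `g = ((n−2)F)/((n−1)F')`. -/
def CondC (n : ℕ) (f : ℕ → ℝ → ℝ) (a : ℝ) (U : Set ℝ) (F : ℝ → ℝ) : Prop :=
  (∀ u ∈ U, DifferentiableAt ℝ F u) ∧
  (∀ u ∈ U, DifferentiableAt ℝ (deriv F) u) ∧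
  (∀ u ∈ U, DifferentiableAt ℝ (deriv (deriv F)) u) ∧
  (∀ u ∈ U, f n u ≠ 0) ∧
  (∀ u ∈ U, F u ≠ 0) ∧
  (∀ u ∈ U, deriv F u = |f n u| ^ ((1 : ℝ) / ((n : ℝ) - 1))) ∧
  Esys n f a U (gFun n F)

/-- The reduced system (S) on `ℝ × U` for `ξ : ℝ → ℝ` and `η : ℝ → ℝ → ℝ`. -/
def SysS (n : ℕ) (f : ℕ → ℝ → ℝ) (ξ : ℝ → ℝ) (η : ℝ → ℝ → ℝ) (U : Set ℝ) : Prop :=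
  (∀ t : ℝ, ∀ u ∈ U, -(pt (pt η) t u) + deriv (f 0) u * η t u + f 1 u * pt η t u
      - f 0 u * pu η t u + 2 * f 0 u * deriv ξ t = 0) ∧
  (∀ t : ℝ, ∀ u ∈ U, deriv (deriv ξ) t - 2 * pu (pt η) t u + deriv (f 1) u * η t u
      + 2 * f 2 u * pt η t u + f 1 u * deriv ξ t = 0) ∧
  (∀ t : ℝ, ∀ u ∈ U, -(pu (pu η) t u) + deriv (f 2) u * η t u + 3 * f 3 u * pt η t u
      + f 2 u * pu η t u = 0) ∧
  (∀ k : ℕ, 3 ≤ k → k ≤ n - 1 → ∀ t : ℝ, ∀ u ∈ U,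
      deriv (f k) u * η t u + ((k : ℝ) + 1) * f (k + 1) u * pt η t u
        + ((k : ℝ) - 1) * f k u * pu η t u + (2 - (k : ℝ)) * f k u * deriv ξ t = 0) ∧
  (∀ t : ℝ, ∀ u ∈ U, deriv (f n) u * η t u + ((n : ℝ) - 1) * f n u * pu η t u
      + (2 - (n : ℝ)) * f n u * deriv ξ t = 0)

theorem stmt8 (n : ℕ) (hn : 4 ≤ n)
    (U : Set ℝ) (hU : IsOpen U) (hUc : U.OrdConnected)
    (f : ℕ → ℝ → ℝ) (hf : ∀ k ≤ n, ∀ u ∈ U, DifferentiableAt ℝ (f k) u)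
    (hfz : ∀ k, n < k → f k = 0)
    (hfn : ∀ u ∈ U, f n u ≠ 0)
    (F : ℝ → ℝ)
    (hF₁ : ∀ u ∈ U, DifferentiableAt ℝ F u)
    (hF₂ : ∀ u ∈ U, DifferentiableAt ℝ (deriv F) u)
    (hF₃ : ∀ u ∈ U, DifferentiableAt ℝ (deriv (deriv F)) u)
    (hFne : ∀ u ∈ U, F u ≠ 0)
    (hF' : ∀ u ∈ U, deriv F u = |f n u| ^ ((1 : ℝ) / ((n : ℝ) - 1)))
    (a c : ℝ) (hc : c ≠ 0)
    (ξ : ℝ → ℝ) (hξ : ∀ t : ℝ, HasDerivAt ξ (c * Real.exp (a * t)) t) :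
    SysS n f ξ (fun t u => c * Real.exp (a * t) * gFun n F u) U
      ↔ Esys n f a U (gFun n F) := by

  have hn4 : (4:ℝ) ≤ (n:ℝ) := by exact_mod_cast hn
  have hn1 : ((n:ℝ) - 1) ≠ 0 := by linarith
  set g := gFun n F with hgdef
  set η : ℝ → ℝ → ℝ := fun t u => c * Real.exp (a * t) * g u with hη
  have hE : ∀ t : ℝ, c * Real.exp (a * t) ≠ 0 := fun t =>
    mul_ne_zero hc (Real.exp_ne_zero _)
  have hexp0 : ∀ t : ℝ, HasDerivAt (fun s => c * Real.exp (a * s))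
      (a * (c * Real.exp (a * t))) t := by
    intro t
    have h1 : HasDerivAt (fun s : ℝ => a * s) a t := by
      simpa using (hasDerivAt_id t).const_mul a
    have h2 := h1.exp.const_mul c
    exact h2.congr_deriv (by ring)
  have hexp : ∀ (b k t : ℝ), HasDerivAt (fun s => b * Real.exp (a * s) * k)
      (a * (b * Real.exp (a * t) * k)) t := by
    intro b k t
    have h1 : HasDerivAt (fun s : ℝ => a * s) a t := by
      simpa using (hasDerivAt_id t).const_mul a
    have h2 := (h1.exp.const_mul b).mul_const k
    exact h2.congr_deriv (by ring)
  have h1 : ∀ t u : ℝ, pt η t u = a * (c * Real.exp (a * t) * g u) := by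
    intro t u
    simp only [pt, hη]
    exact (hexp c (g u) t).deriv
  have h2 : ∀ t u : ℝ, pt (pt η) t u = a * (a * (c * Real.exp (a * t) * g u)) := by
    intro t u
    have he : (fun s => pt η s u) = fun s => a * Real.exp (a * s) * (c * g u) := by
      funext s; rw [h1]; ring
    show deriv (fun s => pt η s u) t = _
    rw [he, (hexp a (c * g u) t).deriv]; ring
  have h3 : ∀ t u : ℝ, pu η t u = c * Real.exp (a * t) * deriv g u := by
    intro t u
    simp only [pu, hη]
    exact deriv_const_mul_field _
  have h4 : ∀ t u : ℝ, pu (pt η) t u = a * (c * Real.exp (a * t)) * deriv g u := by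
    intro t u
    have he : (fun x => pt η t x) = fun x => a * (c * Real.exp (a * t)) * g x := by
      funext x; rw [h1]; ring
    show deriv (fun x => pt η t x) u = _
    rw [he]
    exact deriv_const_mul_field _
  have h5 : ∀ t u : ℝ, pu (pu η) t u = c * Real.exp (a * t) * deriv (deriv g) u := by
    intro t u
    have he : (fun x => pu η t x) = fun x => c * Real.exp (a * t) * deriv g x := by
      funext x; rw [h3]
    show deriv (fun x => pu η t x) u = _
    rw [he]
    exact deriv_const_mul_field _
  have hx1 : ∀ t : ℝ, deriv ξ t = c * Real.exp (a * t) := fun t => (hξ t).deriv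
  have hx2 : ∀ t : ℝ, deriv (deriv ξ) t = a * (c * Real.exp (a * t)) := by
    intro t
    have he : deriv ξ = fun s => c * Real.exp (a * s) := funext hx1
    rw [he, (hexp0 t).deriv]
  -- the automatic equation (Sn) in its u-only form
  have hElast : ∀ u ∈ U, deriv (f n) u * g u + ((n : ℝ) - 1) * f n u * deriv g u
      + (2 - (n : ℝ)) * f n u = 0 := by
    intro u hu
    have hm0 : f n u ≠ 0 := hfn u hu
    have hQ : deriv F u = |f n u| ^ ((1 : ℝ) / ((n : ℝ) - 1)) := hF' u hu
    have hQ0 : (0:ℝ) < deriv F u := by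
      rw [hQ]; exact Real.rpow_pos_of_pos (abs_pos.2 hm0) _
    have hfd : HasDerivAt (f n) (deriv (f n) u) u := (hf n le_rfl u hu).hasDerivAt
    have habs : HasDerivAt (fun x => |f n x|)
        (deriv (f n) u * |f n u| / f n u) u := by
      rcases hm0.lt_or_gt with hneg | hpos
      · have hev : ∀ᶠ x in nhds u, f n x < 0 :=
          hfd.continuousAt.eventually_lt continuousAt_const hneg
        have := hfd.neg.congr_of_eventuallyEq
          (hev.mono fun x hx => abs_of_neg hx)
        refine this.congr_deriv ?_
        rw [abs_of_neg hneg]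
        field_simp
      · have hev : ∀ᶠ x in nhds u, 0 < f n x :=
          continuousAt_const.eventually_lt hfd.continuousAt hpos
        have := hfd.congr_of_eventuallyEq
          (hev.mono fun x hx => abs_of_pos hx)
        refine this.congr_deriv ?_
        rw [abs_of_pos hpos]
        field_simp
    have hrpow := habs.rpow_const (p := (1 : ℝ) / ((n : ℝ) - 1))
      (Or.inl (abs_ne_zero.2 hm0))
    have hev2 : deriv F =ᶠ[nhds u] fun x => |f n x| ^ ((1 : ℝ) / ((n : ℝ) - 1)) :=
      Filter.eventuallyEq_of_mem (hU.mem_nhds hu) hF'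
    have hF'' := hrpow.congr_of_eventuallyEq hev2
    have hRval : deriv (deriv F) u
        = deriv (f n) u * deriv F u / (((n : ℝ) - 1) * f n u) := by
      rw [hF''.deriv, Real.rpow_sub_one (abs_ne_zero.2 hm0), ← hQ]
      field_simp
    have hnum : HasDerivAt (fun x => ((n : ℝ) - 2) * F x)
        (((n : ℝ) - 2) * deriv F u) u := (hF₁ u hu).hasDerivAt.const_mul _
    have hden : HasDerivAt (fun x => ((n : ℝ) - 1) * deriv F x)
        (((n : ℝ) - 1) * deriv (deriv F) u) u := (hF₂ u hu).hasDerivAt.const_mul _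
    have hdne : ((n : ℝ) - 1) * deriv F u ≠ 0 := mul_ne_zero hn1 hQ0.ne'
    have hgd : HasDerivAt g
        ((((n : ℝ) - 2) * deriv F u * (((n : ℝ) - 1) * deriv F u)
          - ((n : ℝ) - 2) * F u * (((n : ℝ) - 1) * deriv (deriv F) u))
          / (((n : ℝ) - 1) * deriv F u) ^ 2) u := hnum.div hden hdne
    have hgu : g u = (((n : ℝ) - 2) * F u) / (((n : ℝ) - 1) * deriv F u) := rfl
    rw [hgu, hgd.deriv, hRval]
    field_simp
    ring
  -- factored forms of the five equations
  have id0 : ∀ t u : ℝ, -(pt (pt η) t u) + deriv (f 0) u * η t u + f 1 u * pt η t u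
      - f 0 u * pu η t u + 2 * f 0 u * deriv ξ t
      = (c * Real.exp (a * t)) * (-a ^ 2 * g u + deriv (f 0) u * g u
        + a * f 1 u * g u - f 0 u * deriv g u + 2 * f 0 u) := by
    intro t u
    rw [h1, h2, h3, hx1]
    simp only [hη]
    ring
  have id1 : ∀ t u : ℝ, deriv (deriv ξ) t - 2 * pu (pt η) t u + deriv (f 1) u * η t u
      + 2 * f 2 u * pt η t u + f 1 u * deriv ξ t
      = (c * Real.exp (a * t)) * (a * (1 - 2 * deriv g u) + deriv (f 1) u * g u
        + 2 * a * f 2 u * g u + f 1 u) := by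
    intro t u
    rw [h1, h4, hx1, hx2]
    simp only [hη]
    ring
  have id2 : ∀ t u : ℝ, -(pu (pu η) t u) + deriv (f 2) u * η t u + 3 * f 3 u * pt η t u
      + f 2 u * pu η t u
      = (c * Real.exp (a * t)) * (-(deriv (deriv g) u) + deriv (f 2) u * g u
        + 3 * a * f 3 u * g u + f 2 u * deriv g u) := by
    intro t u
    rw [h1, h3, h5]
    simp only [hη]
    ring
  have idk : ∀ (k : ℕ) (t u : ℝ), deriv (f k) u * η t u
      + ((k : ℝ) + 1) * f (k + 1) u * pt η t u
      + ((k : ℝ) - 1) * f k u * pu η t u + (2 - (k : ℝ)) * f k u * deriv ξ t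
      = (c * Real.exp (a * t)) * (deriv (f k) u * g u
        + ((k : ℝ) + 1) * a * f (k + 1) u * g u
        + ((k : ℝ) - 1) * f k u * deriv g u + (2 - (k : ℝ)) * f k u) := by
    intro k t u
    rw [h1, h3, hx1]
    simp only [hη]
    ring
  have idn : ∀ t u : ℝ, deriv (f n) u * η t u + ((n : ℝ) - 1) * f n u * pu η t u
      + (2 - (n : ℝ)) * f n u * deriv ξ t
      = (c * Real.exp (a * t)) * (deriv (f n) u * g u
        + ((n : ℝ) - 1) * f n u * deriv g u + (2 - (n : ℝ)) * f n u) := by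
    intro t u
    rw [h3, hx1]
    simp only [hη]
    ring
  constructor
  · rintro ⟨s0, s1, s2, s3, -⟩
    refine ⟨fun u hu => ?_, fun u hu => ?_, fun u hu => ?_,
      fun k hk3 hkn u hu => ?_⟩
    · have h := s0 0 u hu
      rw [id0 0 u] at h
      exact (mul_eq_zero.1 h).resolve_left (hE 0)
    · have h := s1 0 u hu
      rw [id1 0 u] at h
      exact (mul_eq_zero.1 h).resolve_left (hE 0)
    · have h := s2 0 u hu
      rw [id2 0 u] at h
      exact (mul_eq_zero.1 h).resolve_left (hE 0)
    · have h := s3 k hk3 hkn 0 u hu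
      rw [idk k 0 u] at h
      exact (mul_eq_zero.1 h).resolve_left (hE 0)
  · rintro ⟨e0, e1, e2, e3⟩
    refine ⟨fun t u hu => ?_, fun t u hu => ?_, fun t u hu => ?_,
      fun k hk3 hkn t u hu => ?_, fun t u hu => ?_⟩
    · rw [id0 t u, e0 u hu, mul_zero]
    · rw [id1 t u, e1 u hu, mul_zero]
    · rw [id2 t u, e2 u hu, mul_zero]
    · rw [idk k t u, e3 k hk3 hkn u hu, mul_zero]
    · rw [idn t u, hElast u hu, mul_zero]
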